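/- For m = n = 3, the area of the rotated loop x̄(α) = a cos³α + b_x sin α − cosθ(b_x cosθ − b_y sinθ)(sin α − sin³α), ȳ(α) = b_y sin³α + cosθ(b_x sinθ + b_y cosθ)(sin α − sin³α) equals S = (3π a/8)[cosθ(b_x sinθ + b_y cosθ) + b_y]. -/

import Mathlib

open Real intervalIntegral

theorem stmt_13 (a bx by' θ : ℝ)
    (x y : ℝ → ℝ)
    (hx : x = fun α => a * Real.cos α ^ 3 + bx * Real.sin α -
        Real.cos θ * (bx * Real.cos θ - by' * Real.sin θ) * (Real.sin α - Real.sin α ^ 3))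
    (hy : y = fun α => by' * Real.sin α ^ 3 +
        Real.cos θ * (bx * Real.sin θ + by' * Real.cos θ) * (Real.sin α - Real.sin α ^ 3)) :
    (1 / 2) * ∫ α in (0:ℝ)..(2 * π), (x α * deriv y α - y α * deriv x α) =
      3 * π * a / 8 * (Real.cos θ * (bx * Real.sin θ + by' * Real.cos θ) + by') := by
  set C : ℝ := Real.cos θ * (bx * Real.cos θ - by' * Real.sin θ) with hC
  set D : ℝ := Real.cos θ * (bx * Real.sin θ + by' * Real.cos θ) with hD
  -- derivatives
  have hxd : ∀ t : ℝ, HasDerivAt x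
      (-(3 * a) * Real.cos t ^ 2 * Real.sin t + bx * Real.cos t -
        C * (Real.cos t - 3 * Real.sin t ^ 2 * Real.cos t)) t := by
    intro t
    rw [hx]
    have h1 := (Real.hasDerivAt_cos t).pow 3
    have h2 := (Real.hasDerivAt_sin t).const_mul bx
    have h3 := ((Real.hasDerivAt_sin t).sub ((Real.hasDerivAt_sin t).pow 3)).const_mul C
    have := ((h1.const_mul a).add h2).sub h3
    refine this.congr_deriv (Eq.symm ?_)
    ring
  have hyd : ∀ t : ℝ, HasDerivAt y
      (3 * by' * Real.sin t ^ 2 * Real.cos t +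
        D * (Real.cos t - 3 * Real.sin t ^ 2 * Real.cos t)) t := by
    intro t
    rw [hy]
    have h1 := ((Real.hasDerivAt_sin t).pow 3).const_mul by'
    have h3 := ((Real.hasDerivAt_sin t).sub ((Real.hasDerivAt_sin t).pow 3)).const_mul D
    have := h1.add h3
    refine this.congr_deriv (Eq.symm ?_)
    ring
  -- rewrite integrand
  have hint : (fun α => x α * deriv y α - y α * deriv x α) =
      fun t => (a * Real.cos t ^ 3 + bx * Real.sin t - C * (Real.sin t - Real.sin t ^ 3)) *
          (3 * by' * Real.sin t ^ 2 * Real.cos t +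
            D * (Real.cos t - 3 * Real.sin t ^ 2 * Real.cos t)) -
        (by' * Real.sin t ^ 3 + D * (Real.sin t - Real.sin t ^ 3)) *
          (-(3 * a) * Real.cos t ^ 2 * Real.sin t + bx * Real.cos t -
            C * (Real.cos t - 3 * Real.sin t ^ 2 * Real.cos t)) := by
    funext t
    rw [(hxd t).deriv, (hyd t).deriv, hx, hy]
  rw [hint]
  -- antiderivative
  set K0 : ℝ := ((bx - C) * (by' - D) - C * D) / 2 with hK0
  set K1 : ℝ := 3 * a * D / 4 + 3 * a * (by' - D) / 8 with hK1
  set K2 : ℝ := a * D / 4 - 3 * a * (by' - D) / 8 with hK2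
  set K3 : ℝ := a * D / 2 + 3 * a * (by' - D) / 4 with hK3
  have key : ∀ t : ℝ, HasDerivAt
      (fun t => K0 * Real.sin t ^ 4 + K1 * t +
        Real.sin t * Real.cos t * (K2 + K3 * Real.sin t ^ 2))
      ((a * Real.cos t ^ 3 + bx * Real.sin t - C * (Real.sin t - Real.sin t ^ 3)) *
          (3 * by' * Real.sin t ^ 2 * Real.cos t +
            D * (Real.cos t - 3 * Real.sin t ^ 2 * Real.cos t)) -
        (by' * Real.sin t ^ 3 + D * (Real.sin t - Real.sin t ^ 3)) *
          (-(3 * a) * Real.cos t ^ 2 * Real.sin t + bx * Real.cos t -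
            C * (Real.cos t - 3 * Real.sin t ^ 2 * Real.cos t))) t := by
    intro t
    have h1 := ((Real.hasDerivAt_sin t).pow 4).const_mul K0
    have h2 := (hasDerivAt_id t).const_mul K1
    have h3 := ((Real.hasDerivAt_sin t).mul (Real.hasDerivAt_cos t)).mul
      (((Real.hasDerivAt_sin t).pow 2).const_mul K3 |>.const_add K2)
    have H := (h1.add h2).add h3
    refine H.congr_deriv (Eq.symm ?_)
    simp only [Pi.mul_apply, Pi.pow_apply]
    have hsc := Real.sin_sq_add_cos_sq t
    linear_combination ((3:ℝ)/8 * a * D + 3/8 * a * by' + Real.cos t ^ 2 * a * D -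
      Real.sin t ^ 2 * a * D / 4 + 3/4 * Real.sin t ^ 2 * a * by' -
      3 * Real.sin t ^ 2 * Real.cos t ^ 2 * a * D +
      3 * Real.sin t ^ 2 * Real.cos t ^ 2 * a * by') * hsc
  rw [intervalIntegral.integral_eq_sub_of_hasDerivAt (fun t _ => key t)
    (by apply Continuous.intervalIntegrable; fun_prop)]
  simp [Real.sin_two_pi, Real.cos_two_pi]
  ring
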